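/- arXiv:2508.16734 — 4 statements merged into one kernel-verified Lean document; each statement's English description precedes it below -/
import Mathlib

section
/- Let π_old and π̂ be probability vectors with strictly positive entries on the (n-1)-simplex, g ∈ ℝⁿ, γ, τ > 0. The minimizer of π ↦ ⟨γg, π⟩ + KL(π ‖ π_old) + γτ·KL(π ‖ π̂) over the simplex is given componentwise by the softmax formula: π_new,i ∝ (π_old,i · π̂ᵢ^{γτ})^{1/(1+γτ)} · exp(-γgᵢ/(1+γτ)); equivalently π_new = Softmax( log π_old - (γ/(1+γτ))·(g + τ·log(π_old/π̂)) ). -/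
open Finset

/-- The KL-regularized mirror step on the simplex has a softmax closed form:
the minimizer of `π ↦ ⟪γg, π⟫ + KL(π‖π_old) + γτ·KL(π‖π̂)` over the simplex is
`π_new = Softmax(log π_old - (γ/(1+γτ))·(g + τ·log(π_old/π̂)))`. -/
theorem kl_prox_softmax_closed_form {n : ℕ} (g πold πhat πnew : Fin n → ℝ)
    (γ τ : ℝ) (hγ : 0 < γ) (hτ : 0 < τ)
    (hold : ∀ i, 0 < πold i) (hhat : ∀ i, 0 < πhat i)
    (holds : ∑ i, πold i = 1) (hhats : ∑ i, πhat i = 1)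
    (hnew_mem : (∀ i, 0 ≤ πnew i) ∧ ∑ i, πnew i = 1)
    (hmin : ∀ π : Fin n → ℝ, (∀ i, 0 ≤ π i) → (∑ i, π i = 1) →
      (∑ i, γ * g i * πnew i) + (∑ i, πnew i * Real.log (πnew i / πold i))
        + γ * τ * (∑ i, πnew i * Real.log (πnew i / πhat i))
      ≤ (∑ i, γ * g i * π i) + (∑ i, π i * Real.log (π i / πold i))
        + γ * τ * (∑ i, π i * Real.log (π i / πhat i))) :
    ∀ i, πnew i =
      Real.exp (Real.log (πold i)
          - (γ / (1 + γ * τ)) * (g i + τ * Real.log (πold i / πhat i)))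
        / ∑ j, Real.exp (Real.log (πold j)
          - (γ / (1 + γ * τ)) * (g j + τ * Real.log (πold j / πhat j))) := by
  intro i0
  have hc : (0:ℝ) < 1 + γ * τ := by positivity
  set c : ℝ := 1 + γ * τ with hc_def
  set v : Fin n → ℝ := fun i =>
    Real.log (πold i) - γ / c * (g i + τ * Real.log (πold i / πhat i)) with hv
  have hZ : (0:ℝ) < ∑ j, Real.exp (v j) :=
    Finset.sum_pos (fun j _ => Real.exp_pos _) ⟨i0, Finset.mem_univ _⟩
  set Z : ℝ := ∑ j, Real.exp (v j) with hZdef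
  set σ : Fin n → ℝ := fun i => Real.exp (v i) / Z with hσ
  have hσpos : ∀ i, 0 < σ i := fun i => div_pos (Real.exp_pos _) hZ
  have hσsum : ∑ i, σ i = 1 := by
    simp only [hσ]
    rw [← Finset.sum_div]
    exact div_self hZ.ne'
  -- key identity
  have key : ∀ π : Fin n → ℝ, (∀ i, 0 ≤ π i) → (∑ i, π i = 1) →
      (∑ i, γ * g i * π i) + (∑ i, π i * Real.log (π i / πold i))
        + γ * τ * (∑ i, π i * Real.log (π i / πhat i))
      = c * (∑ i, π i * Real.log (π i / σ i)) - c * Real.log Z := by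
    intro π hπ hπs
    have hterm : ∀ i, γ * g i * π i + π i * Real.log (π i / πold i)
        + γ * τ * (π i * Real.log (π i / πhat i))
        = c * (π i * Real.log (π i / σ i)) - c * Real.log Z * π i := by
      intro i
      rcases eq_or_lt_of_le (hπ i) with h0 | hpos
      · simp [← h0]
      · have hlσ : Real.log (σ i) = v i - Real.log Z := by
          simp only [hσ]
          rw [Real.log_div (Real.exp_pos _).ne' hZ.ne', Real.log_exp]
        rw [Real.log_div hpos.ne' (hold i).ne', Real.log_div hpos.ne' (hhat i).ne',
            Real.log_div hpos.ne' (hσpos i).ne', hlσ]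
        simp only [hv]
        rw [Real.log_div (hold i).ne' (hhat i).ne']
        field_simp
        ring
    calc (∑ i, γ * g i * π i) + (∑ i, π i * Real.log (π i / πold i))
        + γ * τ * (∑ i, π i * Real.log (π i / πhat i))
        = ∑ i, (γ * g i * π i + π i * Real.log (π i / πold i)
            + γ * τ * (π i * Real.log (π i / πhat i))) := by
          rw [Finset.sum_add_distrib, Finset.sum_add_distrib, Finset.mul_sum]
      _ = ∑ i, (c * (π i * Real.log (π i / σ i)) - c * Real.log Z * π i) :=
          Finset.sum_congr rfl fun i _ => hterm i
      _ = c * (∑ i, π i * Real.log (π i / σ i)) - c * Real.log Z := by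
          rw [Finset.sum_sub_distrib, ← Finset.mul_sum, ← Finset.mul_sum, hπs, mul_one]
  obtain ⟨hnn, hns⟩ := hnew_mem
  have hmins := hmin σ (fun i => (hσpos i).le) hσsum
  rw [key πnew hnn hns, key σ (fun i => (hσpos i).le) hσsum] at hmins
  have hσself : ∑ i, σ i * Real.log (σ i / σ i) = 0 := by
    apply Finset.sum_eq_zero
    intro i _
    rw [div_self (hσpos i).ne']
    simp
  rw [hσself, mul_zero] at hmins
  have hS : ∑ i, πnew i * Real.log (πnew i / σ i) ≤ 0 := by
    nlinarith
  -- Gibbs termwise bound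
  have hbound : ∀ i, πnew i - σ i ≤ πnew i * Real.log (πnew i / σ i) := by
    intro i
    rcases eq_or_lt_of_le (hnn i) with h0 | hpos
    · rw [← h0]; simp [(hσpos i).le]
    · have h1 : Real.log (σ i / πnew i) ≤ σ i / πnew i - 1 :=
        Real.log_le_sub_one_of_pos (div_pos (hσpos i) hpos)
      have h2 : Real.log (σ i / πnew i) = - Real.log (πnew i / σ i) := by
        rw [← Real.log_inv, inv_div]
      rw [h2] at h1
      have h3 : πnew i * (σ i / πnew i) = σ i := by field_simp
      nlinarith [mul_le_mul_of_nonneg_left h1 hpos.le]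
  have hsum0 : ∑ i, (πnew i * Real.log (πnew i / σ i) - (πnew i - σ i)) = 0 := by
    have hge : 0 ≤ ∑ i, (πnew i * Real.log (πnew i / σ i) - (πnew i - σ i)) :=
      Finset.sum_nonneg fun i _ => by linarith [hbound i]
    have hdiff : ∑ i, (πnew i * Real.log (πnew i / σ i) - (πnew i - σ i))
        = (∑ i, πnew i * Real.log (πnew i / σ i)) - ((∑ i, πnew i) - ∑ i, σ i) := by
      rw [Finset.sum_sub_distrib, Finset.sum_sub_distrib]
    rw [hdiff, hns, hσsum] at hge ⊢
    linarith
  have heach := (Finset.sum_eq_zero_iff_of_nonneg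
      (fun i _ => by linarith [hbound i])).mp hsum0 i0 (Finset.mem_univ _)
  -- conclude πnew i0 = σ i0
  have hfinal : πnew i0 = σ i0 := by
    rcases eq_or_lt_of_le (hnn i0) with h0 | hpos
    · exfalso
      rw [← h0] at heach
      simp at heach
      exact (hσpos i0).ne' heach
    · by_contra hne
      have hx : σ i0 / πnew i0 ≠ 1 := by
        intro h
        exact hne ((div_eq_one_iff_eq hpos.ne').mp h).symm
      have h1 : Real.log (σ i0 / πnew i0) < σ i0 / πnew i0 - 1 :=
        Real.log_lt_sub_one_of_pos (div_pos (hσpos i0) hpos) hx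
      have h2 : Real.log (σ i0 / πnew i0) = - Real.log (πnew i0 / σ i0) := by
        rw [← Real.log_inv, inv_div]
      rw [h2] at h1
      have h3 : πnew i0 * (σ i0 / πnew i0) = σ i0 := by field_simp
      nlinarith [mul_lt_mul_of_pos_left h1 hpos]
  rw [hfinal]
end

section
/- Suppose each fᵢ : ℝᵈ → ℝ (i = 1,…,n) is convex with Lᵢ-Lipschitz gradient and is Kᵢ-Lipschitz. Define on Z = ℝᵈ × Δ_{n-1} the operator F(θ, π) = (Σᵢ πᵢ∇fᵢ(θ), (-f₁(θ), …, -fₙ(θ))). Then for the norm ‖(θ,π)‖² = ‖θ‖₂² + ‖π‖₁² and its dual, F is L_F-Lipschitz with L_F² ≤ 4·( maxᵢ Lᵢ² + maxᵢ Kᵢ² ). -/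
open Finset
open scoped RealInnerProductSpace

/-- Lipschitz constant of the saddle operator
`F(θ,π) = (∑ᵢ πᵢ∇fᵢ(θ), (-f₁(θ),…,-fₙ(θ)))` for the product norm
`‖(θ,π)‖² = ‖θ‖₂² + ‖π‖₁²`: using the dual-norm bound
`‖(a,b)‖_*² ≤ 2‖a‖₂² + 2‖b‖_∞²`, one has `L_F² ≤ 4(maxᵢ Lᵢ² + maxᵢ Kᵢ²)`. -/
theorem saddle_operator_lipschitz {d n : ℕ} [NeZero n]
    (f : Fin n → EuclideanSpace ℝ (Fin d) → ℝ)
    (f' : Fin n → EuclideanSpace ℝ (Fin d) → EuclideanSpace ℝ (Fin d))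
    (L K : Fin n → ℝ)
    (hgrad : ∀ i θ, HasGradientAt (f i) (f' i θ) θ)
    (hL : ∀ i θ₁ θ₂, ‖f' i θ₁ - f' i θ₂‖ ≤ L i * ‖θ₁ - θ₂‖)
    (hK : ∀ i θ₁ θ₂, |f i θ₁ - f i θ₂| ≤ K i * ‖θ₁ - θ₂‖)
    (hconv : ∀ i, ConvexOn ℝ Set.univ (f i)) :
    ∀ (θ₁ θ₂ : EuclideanSpace ℝ (Fin d)) (π₁ π₂ : Fin n → ℝ),
      (∀ i, 0 ≤ π₁ i) → (∑ i, π₁ i = 1) →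
      (∀ i, 0 ≤ π₂ i) → (∑ i, π₂ i = 1) →
      2 * ‖(∑ i, π₁ i • f' i θ₁) - (∑ i, π₂ i • f' i θ₂)‖^2
        + 2 * (Finset.univ.sup' Finset.univ_nonempty
            (fun i => |f i θ₁ - f i θ₂|))^2
      ≤ 4 * ((Finset.univ.sup' Finset.univ_nonempty (fun i => (L i)^2))
            + (Finset.univ.sup' Finset.univ_nonempty (fun i => (K i)^2)))
          * (‖θ₁ - θ₂‖^2 + (∑ i, |π₁ i - π₂ i|)^2) := by
  intro θ₁ θ₂ π₁ π₂ h₁0 h₁s h₂0 h₂s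
  -- abbreviations
  set ML : ℝ := Finset.univ.sup' Finset.univ_nonempty (fun i => |L i|) with hMLdef
  set MK : ℝ := Finset.univ.sup' Finset.univ_nonempty (fun i => |K i|) with hMKdef
  have hML : ∀ i, |L i| ≤ ML := by
    intro i; rw [hMLdef]; exact Finset.le_sup' (fun j => |L j|) (Finset.mem_univ i)
  have hMK : ∀ i, |K i| ≤ MK := by
    intro i; rw [hMKdef]; exact Finset.le_sup' (fun j => |K j|) (Finset.mem_univ i)
  have hML0 : (0:ℝ) ≤ ML := le_trans (abs_nonneg _) (hML 0)
  have hMK0 : (0:ℝ) ≤ MK := le_trans (abs_nonneg _) (hMK 0)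
  have hML2 : ML^2 ≤ Finset.univ.sup' Finset.univ_nonempty (fun i => (L i)^2) := by
    obtain ⟨i, _, hi⟩ := Finset.exists_mem_eq_sup' (Finset.univ_nonempty) (fun i => |L i|)
    rw [hMLdef, hi, sq_abs]
    exact Finset.le_sup' (fun j => (L j)^2) (Finset.mem_univ i)
  have hMK2 : MK^2 ≤ Finset.univ.sup' Finset.univ_nonempty (fun i => (K i)^2) := by
    obtain ⟨i, _, hi⟩ := Finset.exists_mem_eq_sup' (Finset.univ_nonempty) (fun i => |K i|)
    rw [hMKdef, hi, sq_abs]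
    exact Finset.le_sup' (fun j => (K j)^2) (Finset.mem_univ i)
  -- gradient norm bound
  have hgb : ∀ i θ, ‖f' i θ‖ ≤ MK := by
    intro i θ
    have hlip : LipschitzWith ⟨|K i|, abs_nonneg _⟩ (f i) := by
      refine LipschitzWith.of_dist_le_mul ?_
      intro x y
      rw [Real.dist_eq, dist_eq_norm]
      exact (hK i x y).trans (mul_le_mul_of_nonneg_right (le_abs_self _) (norm_nonneg _))
    have h1 : ‖(InnerProductSpace.toDual ℝ (EuclideanSpace ℝ (Fin d))) (f' i θ)‖ ≤ |K i| :=
      (hgrad i θ).hasFDerivAt.le_of_lipschitz hlip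
    rw [LinearIsometryEquiv.norm_map] at h1
    exact h1.trans (hMK i)
  set a : ℝ := ‖θ₁ - θ₂‖ with hadef
  set b : ℝ := ∑ i, |π₁ i - π₂ i| with hbdef
  have ha0 : 0 ≤ a := norm_nonneg _
  have hb0 : 0 ≤ b := Finset.sum_nonneg (fun i _ => abs_nonneg _)
  -- bound the first norm
  have hA : ‖(∑ i, π₁ i • f' i θ₁) - (∑ i, π₂ i • f' i θ₂)‖ ≤ ML * a + MK * b := by
    have hdecomp : (∑ i, π₁ i • f' i θ₁) - (∑ i, π₂ i • f' i θ₂)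
        = (∑ i, π₁ i • (f' i θ₁ - f' i θ₂)) + ∑ i, (π₁ i - π₂ i) • f' i θ₂ := by
      rw [← Finset.sum_add_distrib, ← Finset.sum_sub_distrib]
      exact Finset.sum_congr rfl (fun i _ => by module)
    rw [hdecomp]
    refine (norm_add_le _ _).trans ?_
    have h1 : ‖∑ i, π₁ i • (f' i θ₁ - f' i θ₂)‖ ≤ ML * a := by
      refine (norm_sum_le _ _).trans ?_
      calc ∑ i, ‖π₁ i • (f' i θ₁ - f' i θ₂)‖
          ≤ ∑ i, π₁ i * (ML * a) := by
            refine Finset.sum_le_sum (fun i _ => ?_)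
            rw [norm_smul, Real.norm_eq_abs, abs_of_nonneg (h₁0 i)]
            refine mul_le_mul_of_nonneg_left ?_ (h₁0 i)
            exact (hL i θ₁ θ₂).trans (mul_le_mul_of_nonneg_right
              ((le_abs_self _).trans (hML i)) ha0)
        _ = ML * a := by rw [← Finset.sum_mul, h₁s, one_mul]
    have h2 : ‖∑ i, (π₁ i - π₂ i) • f' i θ₂‖ ≤ MK * b := by
      refine (norm_sum_le _ _).trans ?_
      calc ∑ i, ‖(π₁ i - π₂ i) • f' i θ₂‖
          ≤ ∑ i, |π₁ i - π₂ i| * MK := by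
            refine Finset.sum_le_sum (fun i _ => ?_)
            rw [norm_smul, Real.norm_eq_abs]
            exact mul_le_mul_of_nonneg_left (hgb i θ₂) (abs_nonneg _)
        _ = MK * b := by rw [← Finset.sum_mul, hbdef, mul_comm]
    linarith
  have hB : Finset.univ.sup' Finset.univ_nonempty (fun i => |f i θ₁ - f i θ₂|) ≤ MK * a := by
    refine Finset.sup'_le _ _ (fun i _ => ?_)
    exact (hK i θ₁ θ₂).trans (mul_le_mul_of_nonneg_right ((le_abs_self _).trans (hMK i)) ha0)
  have hBnn : (0:ℝ) ≤ Finset.univ.sup' Finset.univ_nonempty (fun i => |f i θ₁ - f i θ₂|) :=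
    le_trans (abs_nonneg _) (Finset.le_sup' (fun j => |f j θ₁ - f j θ₂|) (Finset.mem_univ 0))
  have hAnn : (0:ℝ) ≤ ‖(∑ i, π₁ i • f' i θ₁) - (∑ i, π₂ i • f' i θ₂)‖ := norm_nonneg _
  nlinarith [sq_nonneg (ML * a - MK * b), sq_nonneg a, sq_nonneg b, mul_nonneg ha0 hb0,
    mul_nonneg hML0 hMK0, sq_nonneg (ML * b), sq_nonneg (MK * a),
    mul_le_mul hA hA hAnn (by positivity : (0:ℝ) ≤ ML * a + MK * b),
    mul_le_mul hB hB hBnn (by positivity : (0:ℝ) ≤ MK * a),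
    mul_nonneg (mul_nonneg hML0 hML0) (sq_nonneg b),
    mul_nonneg (mul_nonneg hMK0 hMK0) (sq_nonneg a),
    mul_le_mul_of_nonneg_right hML2 (sq_nonneg a),
    mul_le_mul_of_nonneg_right hML2 (sq_nonneg b),
    mul_le_mul_of_nonneg_right hMK2 (sq_nonneg a),
    mul_le_mul_of_nonneg_right hMK2 (sq_nonneg b)]
end

section
/- Let aₜ, ξₜ be real sequences, bₜ > 0, β₁ ∈ [0,1), and suppose for all t ≥ 0: aₜ ≤ (1/bₜ)(1-β₁)ξₜ + β₁(b_{t-1}/bₜ)a_{t-1} + 2β₁(b_{t-1}/bₜ)η‖d^{t-1}‖² with a₋₁ = 0 and d⁻¹ = 0. Then Σ_{t=0}^{T} aₜ ≤ Σ_{k=0}^{T} Cₖξₖ + 2η·Σ_{k=0}^{T-1} Aₖ‖dᵏ‖², where Cₖ = (1-β₁)Σ_{t=k}^{T} β₁^{t-k}/bₜ and Aₖ = bₖ·Σ_{t=k+1}^{T} β₁^{t-k}/bₜ. -/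
open Finset

/-- Summed form of the recursion on the inner products `aₜ` in the Adam
analysis (Lemma on sums estimation): unrolling
`aₜ ≤ (1/bₜ)(1-β₁)ξₜ + β₁(b_{t-1}/bₜ)a_{t-1} + 2β₁(b_{t-1}/bₜ)η‖d^{t-1}‖²`
and summing yields
`∑ₜ aₜ ≤ ∑ₖ Cₖξₖ + 2η∑ₖ Aₖ‖dᵏ‖²` with
`Cₖ = (1-β₁)∑_{t=k}^T β₁^{t-k}/bₜ` and `Aₖ = bₖ∑_{t=k+1}^T β₁^{t-k}/bₜ`. -/
theorem adam_sums_estimation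
    {E : Type*} [NormedAddCommGroup E]
    (a ξ b : ℕ → ℝ) (d : ℕ → E) (β₁ η : ℝ)
    (hβ : 0 ≤ β₁) (hβ1 : β₁ < 1) (hη : 0 < η)
    (hb : ∀ t, 0 < b t)
    (h0 : a 0 ≤ (1 / b 0) * (1 - β₁) * ξ 0)
    (hrec : ∀ t, a (t + 1)
      ≤ (1 / b (t + 1)) * (1 - β₁) * ξ (t + 1)
        + β₁ * (b t / b (t + 1)) * a t
        + 2 * β₁ * (b t / b (t + 1)) * η * ‖d t‖^2) :
    ∀ T, ∑ t ∈ Finset.range (T + 1), a t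
      ≤ (∑ k ∈ Finset.range (T + 1),
          ((1 - β₁) * ∑ t ∈ Finset.Icc k T, β₁^(t - k) / b t) * ξ k)
        + 2 * η * ∑ k ∈ Finset.range T,
          (b k * ∑ t ∈ Finset.Icc (k + 1) T, β₁^(t - k) / b t) * ‖d k‖^2 := by
  intro T
  have hbne : ∀ t, b t ≠ 0 := fun t => (hb t).ne'
  -- pointwise unrolled bound
  have key : ∀ t, a t ≤ (1 / b t) *
      ((1 - β₁) * ∑ k ∈ range (t + 1), β₁ ^ (t - k) * ξ k
        + 2 * η * ∑ k ∈ range t, β₁ ^ (t - k) * b k * ‖d k‖ ^ 2) := by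
    intro t
    induction t with
    | zero => simpa [mul_assoc] using h0
    | succ t ih =>
      have hXrec : (1 - β₁) * ∑ k ∈ range (t + 1 + 1), β₁ ^ (t + 1 - k) * ξ k
          + 2 * η * ∑ k ∈ range (t + 1), β₁ ^ (t + 1 - k) * b k * ‖d k‖ ^ 2
          = (1 - β₁) * ξ (t + 1)
            + β₁ * ((1 - β₁) * ∑ k ∈ range (t + 1), β₁ ^ (t - k) * ξ k
              + 2 * η * ∑ k ∈ range t, β₁ ^ (t - k) * b k * ‖d k‖ ^ 2)
            + 2 * β₁ * b t * η * ‖d t‖ ^ 2 := by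
        rw [sum_range_succ (fun k => β₁ ^ (t + 1 - k) * ξ k) (t + 1),
          sum_range_succ (fun k => β₁ ^ (t + 1 - k) * b k * ‖d k‖ ^ 2) t]
        have hp1 : ∑ k ∈ range (t + 1), β₁ ^ (t + 1 - k) * ξ k
            = β₁ * ∑ k ∈ range (t + 1), β₁ ^ (t - k) * ξ k := by
          rw [mul_sum]
          refine sum_congr rfl fun k hk => ?_
          rw [mem_range] at hk
          rw [show t + 1 - k = (t - k) + 1 by omega, pow_succ]
          ring
        have hp2 : ∑ k ∈ range t, β₁ ^ (t + 1 - k) * b k * ‖d k‖ ^ 2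
            = β₁ * ∑ k ∈ range t, β₁ ^ (t - k) * b k * ‖d k‖ ^ 2 := by
          rw [mul_sum]
          refine sum_congr rfl fun k hk => ?_
          rw [mem_range] at hk
          rw [show t + 1 - k = (t - k) + 1 by omega, pow_succ]
          ring
        rw [hp1, hp2, show t + 1 - (t + 1) = 0 by omega, show t + 1 - t = 1 by omega,
          pow_zero, pow_one]
        ring
      have h1 : β₁ * (b t / b (t + 1)) * a t
          ≤ β₁ * (b t / b (t + 1)) * ((1 / b t) *
            ((1 - β₁) * ∑ k ∈ range (t + 1), β₁ ^ (t - k) * ξ k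
              + 2 * η * ∑ k ∈ range t, β₁ ^ (t - k) * b k * ‖d k‖ ^ 2)) :=
        mul_le_mul_of_nonneg_left ih (mul_nonneg hβ (div_nonneg (hb t).le (hb (t + 1)).le))
      have h2 := hrec t
      have final : (1 / b (t + 1)) *
          ((1 - β₁) * ∑ k ∈ range (t + 1 + 1), β₁ ^ (t + 1 - k) * ξ k
            + 2 * η * ∑ k ∈ range (t + 1), β₁ ^ (t + 1 - k) * b k * ‖d k‖ ^ 2)
          = (1 / b (t + 1)) * (1 - β₁) * ξ (t + 1)
            + β₁ * (b t / b (t + 1)) * ((1 / b t) *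
              ((1 - β₁) * ∑ k ∈ range (t + 1), β₁ ^ (t - k) * ξ k
                + 2 * η * ∑ k ∈ range t, β₁ ^ (t - k) * b k * ‖d k‖ ^ 2))
            + 2 * β₁ * (b t / b (t + 1)) * η * ‖d t‖ ^ 2 := by
        rw [hXrec]
        field_simp [hbne t, hbne (t + 1)]
      linarith [h1, h2, final]
  -- sum the pointwise bound
  have step1 : ∑ t ∈ range (T + 1), a t
      ≤ ∑ t ∈ range (T + 1), (1 / b t) *
        ((1 - β₁) * ∑ k ∈ range (t + 1), β₁ ^ (t - k) * ξ k
          + 2 * η * ∑ k ∈ range t, β₁ ^ (t - k) * b k * ‖d k‖ ^ 2) :=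
    sum_le_sum fun t _ => key t
  refine step1.trans_eq ?_
  -- split each summand into two double sums
  have split : ∑ t ∈ range (T + 1), (1 / b t) *
        ((1 - β₁) * ∑ k ∈ range (t + 1), β₁ ^ (t - k) * ξ k
          + 2 * η * ∑ k ∈ range t, β₁ ^ (t - k) * b k * ‖d k‖ ^ 2)
      = (∑ t ∈ range (T + 1), ∑ k ∈ range (t + 1),
          (1 - β₁) * (β₁ ^ (t - k) / b t) * ξ k)
        + ∑ t ∈ range (T + 1), ∑ k ∈ range t,
          2 * η * (β₁ ^ (t - k) * (b k / b t)) * ‖d k‖ ^ 2 := by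
    rw [← sum_add_distrib]
    refine sum_congr rfl fun t _ => ?_
    rw [mul_add]
    congr 1
    · rw [mul_sum, mul_sum]
      refine sum_congr rfl fun k _ => ?_
      field_simp
    · rw [mul_sum, mul_sum]
      refine sum_congr rfl fun k _ => ?_
      field_simp
  rw [split]
  congr 1
  · rw [sum_comm' (t' := range (T + 1)) (s' := fun k => Icc k T)
      (fun x y => by simp only [mem_range, mem_Icc]; omega)]
    refine sum_congr rfl fun k _ => ?_
    simp only [mul_sum, sum_mul]
  · rw [sum_comm' (t' := range (T + 1)) (s' := fun k => Icc (k + 1) T)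
      (fun x y => by simp only [mem_range, mem_Icc]; omega)]
    rw [sum_range_succ, show Icc (T + 1) T = ∅ from Icc_eq_empty (by omega), sum_empty,
      add_zero]
    simp only [mul_sum, sum_mul]
    exact sum_congr rfl fun k _ => sum_congr rfl fun t _ => by ring
end

section
/- Let f(x, ·) be concave and L-smooth on a convex set Y, and suppose the mirror-ascent step y_t = argmin_{y ∈ Y} { ⟨-η·g, y⟩ + KL(y ‖ y_{t-1}) } with unbiased stochastic gradient g of variance at most σ² satisfies the three-point inequality together with KL(y_t ‖ y_{t-1}) ≥ ‖y_t - y_{t-1}‖²/2 and η ≤ 1/(2L). Then for any y ∈ Y: E[KL(y ‖ y_t)] ≤ E[KL(y ‖ y_{t-1})] + η·E[f(x_{t-1}, y_t) - f(x_{t-1}, y)] + η²σ². -/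
open Finset MeasureTheory
open scoped RealInnerProductSpace

lemma descent_half
    {E : Type*} [NormedAddCommGroup E] [InnerProductSpace ℝ E]
    (φ : E → ℝ) (φ' : E → E) (L : ℝ) (hL : 0 < L)
    (hconc : ∀ p q, φ q ≤ φ p + ⟪φ' p, q - p⟫)
    (hsmooth : ∀ p q, ‖φ' p - φ' q‖ ≤ L * ‖p - q‖) :
    ∀ p q, φ p + ⟪φ' p, q - p⟫ - φ q ≤ L / 2 * ‖q - p‖ ^ 2 := by
  have key : ∀ k : ℕ, ∀ p q, φ p + ⟪φ' p, q - p⟫ - φ q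
      ≤ (L / 2 + L / 2 ^ (k + 1)) * ‖q - p‖ ^ 2 := by
    intro k
    induction k with
    | zero =>
      intro p q
      have h1 := hconc q p
      have h2 : ⟪φ' p - φ' q, q - p⟫ ≤ ‖φ' p - φ' q‖ * ‖q - p‖ := real_inner_le_norm _ _
      have h3 : ‖φ' p - φ' q‖ * ‖q - p‖ ≤ (L * ‖p - q‖) * ‖q - p‖ :=
        mul_le_mul_of_nonneg_right (hsmooth p q) (norm_nonneg _)
      have h4 : ‖p - q‖ = ‖q - p‖ := norm_sub_rev _ _
      have h5 : ⟪φ' q, p - q⟫ = -⟪φ' q, q - p⟫ := by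
        rw [← inner_neg_right]; congr 1; abel
      have h6 : ⟪φ' p - φ' q, q - p⟫ = ⟪φ' p, q - p⟫ - ⟪φ' q, q - p⟫ := inner_sub_left _ _ _
      rw [h4] at h3
      nlinarith [sq_nonneg (‖q - p‖)]
    | succ k ih =>
      intro p q
      set m := p + (1/2 : ℝ) • (q - p) with hm
      have hmp : m - p = (1/2 : ℝ) • (q - p) := by simp [hm]
      have hqm : q - m = (1/2 : ℝ) • (q - p) := by
        rw [hm]; module
      have hnmp : ‖m - p‖ = ‖q - p‖ / 2 := by
        rw [hmp, norm_smul]; simp; ring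
      have hnqm : ‖q - m‖ = ‖q - p‖ / 2 := by
        rw [hqm, norm_smul]; simp; ring
      have hid : φ p + ⟪φ' p, q - p⟫ - φ q
          = (φ p + ⟪φ' p, m - p⟫ - φ m) + (φ m + ⟪φ' m, q - m⟫ - φ q)
            + ⟪φ' p - φ' m, q - m⟫ := by
        have e1 : ⟪φ' p, q - p⟫ = ⟪φ' p, m - p⟫ + ⟪φ' p, q - m⟫ := by
          rw [← inner_add_right]; congr 1; abel
        have e2 : ⟪φ' p - φ' m, q - m⟫ = ⟪φ' p, q - m⟫ - ⟪φ' m, q - m⟫ := inner_sub_left _ _ _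
        rw [e1, e2]; ring
      have h1 := ih p m
      have h2 := ih m q
      have h3 : ⟪φ' p - φ' m, q - m⟫ ≤ L * ‖p - m‖ * ‖q - m‖ := by
        calc ⟪φ' p - φ' m, q - m⟫ ≤ ‖φ' p - φ' m‖ * ‖q - m‖ := real_inner_le_norm _ _
        _ ≤ L * ‖p - m‖ * ‖q - m‖ :=
          mul_le_mul_of_nonneg_right (hsmooth p m) (norm_nonneg _)
      have h4 : ‖p - m‖ = ‖q - p‖ / 2 := by rw [norm_sub_rev]; exact hnmp
      rw [h4, hnqm] at h3
      rw [hnmp] at h1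
      rw [hnqm] at h2
      have hpow : (2:ℝ) ^ (k + 1 + 1) = 2 * 2 ^ (k + 1) := by ring
      have hpos : (0:ℝ) < 2 ^ (k + 1) := by positivity
      rw [hid, hpow]
      have : (L / 2 + L / 2 ^ (k + 1)) * (‖q - p‖ / 2) ^ 2
          + (L / 2 + L / 2 ^ (k + 1)) * (‖q - p‖ / 2) ^ 2
          + L * (‖q - p‖ / 2) * (‖q - p‖ / 2)
          = (L / 2 + L / (2 * 2 ^ (k + 1))) * ‖q - p‖ ^ 2 := by
        field_simp; ring
      linarith [h1, h2, h3, this ▸ le_refl ((L / 2 + L / (2 * 2 ^ (k+1))) * ‖q - p‖ ^ 2)]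
  intro p q
  have htend : Filter.Tendsto (fun k : ℕ => (L / 2 + L / 2 ^ (k + 1)) * ‖q - p‖ ^ 2)
      Filter.atTop (nhds (L / 2 * ‖q - p‖ ^ 2)) := by
    have h0 : Filter.Tendsto (fun k : ℕ => L / 2 ^ (k + 1)) Filter.atTop (nhds 0) := by
      have := tendsto_pow_atTop_nhds_zero_of_lt_one (by norm_num : (0:ℝ) ≤ 1/2) (by norm_num : (1/2:ℝ) < 1)
      have := (this.const_mul (L/2))
      simp only [mul_zero] at this
      convert this using 2 with k
      rw [pow_succ, one_div, inv_pow, div_mul_eq_mul_div, ← div_div]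
      ring
    have h1 : Filter.Tendsto (fun k : ℕ => L / 2 + L / 2 ^ (k + 1)) Filter.atTop (nhds (L / 2 + 0)) :=
      (tendsto_const_nhds.add h0)
    have := h1.mul_const (‖q - p‖ ^ 2)
    simpa using this
  exact ge_of_tendsto' htend (fun k => key k p q)

/-- One-step descent lemma for the stochastic KL-mirror-ascent update on a
compact convex subset `Y` of the simplex: for any `y ∈ Y`,
`E[KL(y‖y_t)] ≤ KL(y‖y_{t-1}) + η·E[φ(y_t) - φ(y)] + η²σ²`,
where `φ = f(x_{t-1}, ·)` is concave and `L`-smooth, `η ≤ 1/(2L)`, and the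
stochastic gradient `g` is unbiased with variance at most `σ²`. -/
theorem mirror_ascent_kl_descent
    {Ω : Type*} [MeasureSpace Ω] (μ : Measure Ω) [IsProbabilityMeasure μ]
    {n : ℕ} (Y : Set (EuclideanSpace ℝ (Fin n)))
    (hYconv : Convex ℝ Y)
    (hYsimplex : ∀ y ∈ Y, (∀ i, 0 ≤ y i) ∧ ∑ i, y i = 1)
    (KL : EuclideanSpace ℝ (Fin n) → EuclideanSpace ℝ (Fin n) → ℝ)
    (hKL : ∀ p q, KL p q = ∑ i, p i * Real.log (p i / q i))
    (φ : EuclideanSpace ℝ (Fin n) → ℝ)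
    (φ' : EuclideanSpace ℝ (Fin n) → EuclideanSpace ℝ (Fin n))
    (L η σ : ℝ) (hL : 0 < L) (hη : 0 < η) (hηL : η ≤ 1 / (2 * L)) (hσ : 0 ≤ σ)
    (hconc : ∀ p q, φ q ≤ φ p + ⟪φ' p, q - p⟫)
    (hsmooth : ∀ p q, ‖φ' p - φ' q‖ ≤ L * ‖p - q‖)
    (yprev : EuclideanSpace ℝ (Fin n)) (hyprev : yprev ∈ Y)
    (g : Ω → EuclideanSpace ℝ (Fin n))
    (yt : Ω → EuclideanSpace ℝ (Fin n)) (hyt : ∀ ω, yt ω ∈ Y)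
    (hint_g : Integrable g μ)
    (hunbiased : ∫ ω, g ω ∂μ = φ' yprev)
    (hint_var : Integrable (fun ω => ‖g ω - φ' yprev‖^2) μ)
    (hvar : ∫ ω, ‖g ω - φ' yprev‖^2 ∂μ ≤ σ^2)
    (hint_KL : ∀ y, Integrable (fun ω => KL y (yt ω)) μ)
    (hint_φ : Integrable (fun ω => φ (yt ω)) μ)
    (hthree : ∀ ω, ∀ y ∈ Y,
      KL y (yt ω) ≤ η * ⟪yprev - y, g ω⟫ + η * ⟪yt ω - yprev, g ω⟫
        + KL y yprev - KL (yt ω) yprev)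
    (hpinsker : ∀ ω, ‖yt ω - yprev‖^2 / 2 ≤ KL (yt ω) yprev) :
    ∀ y ∈ Y, ∫ ω, KL y (yt ω) ∂μ
      ≤ KL y yprev + η * ((∫ ω, φ (yt ω) ∂μ) - φ y) + η^2 * σ^2 := by
  intro y hy
  have hdesc := descent_half φ φ' L hL hconc hsmooth
  have hηL2 : η * L ≤ 1 / 2 := by
    rw [le_div_iff₀ (by positivity : (0:ℝ) < 2 * L)] at hηL
    nlinarith
  -- pointwise bound
  have hpt : ∀ ω, KL y (yt ω) ≤ η * ⟪yprev - y, g ω⟫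
      + (KL y yprev + η * (φ (yt ω) - φ yprev) + η ^ 2 * ‖g ω - φ' yprev‖ ^ 2) := by
    intro ω
    have h3 := hthree ω y hy
    set Δ : EuclideanSpace ℝ (Fin n) := yt ω - yprev with hΔ
    set e : EuclideanSpace ℝ (Fin n) := g ω - φ' yprev with he
    have hsplit : ⟪Δ, g ω⟫ = ⟪Δ, φ' yprev⟫ + ⟪Δ, e⟫ := by
      rw [← inner_add_right]; congr 1; rw [he]; abel
    have hd : ⟪Δ, φ' yprev⟫ ≤ φ (yt ω) - φ yprev + L / 2 * ‖Δ‖ ^ 2 := by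
      have := hdesc yprev (yt ω)
      have hc : ⟪φ' yprev, yt ω - yprev⟫ = ⟪Δ, φ' yprev⟫ := real_inner_comm _ _
      rw [hc] at this
      linarith
    have hy2 : η * ⟪Δ, e⟫ ≤ ‖Δ‖ ^ 2 / 4 + η ^ 2 * ‖e‖ ^ 2 := by
      have hcs : ⟪Δ, e⟫ ≤ ‖Δ‖ * ‖e‖ := real_inner_le_norm _ _
      nlinarith [sq_nonneg (‖Δ‖ / 2 - η * ‖e‖), norm_nonneg Δ, norm_nonneg e, hη.le]
    have hp := hpinsker ω
    have hΔsq : 0 ≤ ‖Δ‖ ^ 2 := sq_nonneg _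
    rw [hsplit] at h3
    nlinarith [hd, hp]
  -- integrability of RHS
  have hint_inner : Integrable (fun ω => ⟪yprev - y, g ω⟫) μ := hint_g.const_inner _
  have hint_rhs : Integrable (fun ω => η * ⟪yprev - y, g ω⟫
      + (KL y yprev + η * (φ (yt ω) - φ yprev) + η ^ 2 * ‖g ω - φ' yprev‖ ^ 2)) μ := by
    apply (hint_inner.const_mul η).add
    apply Integrable.add
    · exact (integrable_const _).add ((hint_φ.sub (integrable_const _)).const_mul η)
    · exact hint_var.const_mul (η ^ 2)
  have hmono := integral_mono (hint_KL y) hint_rhs hpt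
  -- compute the integral of the RHS
  have hIinner : ∫ ω, ⟪yprev - y, g ω⟫ ∂μ = ⟪yprev - y, φ' yprev⟫ := by
    rw [← hunbiased]
    exact (integral_inner hint_g (yprev - y))
  have i2 : Integrable (fun ω => KL y yprev + η * (φ (yt ω) - φ yprev)) μ := by
    exact (integrable_const _).add ((hint_φ.sub (integrable_const _)).const_mul η)
  have i3 : Integrable (fun ω => η ^ 2 * ‖g ω - φ' yprev‖ ^ 2) μ :=
    hint_var.const_mul (η ^ 2)
  have i23 : Integrable (fun ω => KL y yprev + η * (φ (yt ω) - φ yprev)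
      + η ^ 2 * ‖g ω - φ' yprev‖ ^ 2) μ := by exact i2.add i3
  have i2a : Integrable (fun ω => η * (φ (yt ω) - φ yprev)) μ := by
    exact (hint_φ.sub (integrable_const _)).const_mul η
  have hcomp : ∫ ω, (η * ⟪yprev - y, g ω⟫
      + (KL y yprev + η * (φ (yt ω) - φ yprev) + η ^ 2 * ‖g ω - φ' yprev‖ ^ 2)) ∂μ
      = η * ⟪yprev - y, φ' yprev⟫
        + (KL y yprev + η * ((∫ ω, φ (yt ω) ∂μ) - φ yprev)
          + η ^ 2 * ∫ ω, ‖g ω - φ' yprev‖ ^ 2 ∂μ) := by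
    rw [integral_add (hint_inner.const_mul η) i23, integral_add i2 i3,
      integral_add (integrable_const _) i2a,
      integral_const_mul, integral_const_mul, integral_const_mul, hIinner,
      integral_sub hint_φ (integrable_const _)]
    simp [measure_univ]
  rw [hcomp] at hmono
  have hg : ⟪yprev - y, φ' yprev⟫ ≤ φ yprev - φ y := by
    have hcy := hconc yprev y
    have hc : ⟪yprev - y, φ' yprev⟫ = -⟪φ' yprev, y - yprev⟫ := by
      rw [real_inner_comm, show yprev - y = -(y - yprev) by abel, inner_neg_right]
    rw [hc]
    linarith
  nlinarith [hvar, sq_nonneg η]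
end
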